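/- For every integer n ≥ 1, the number of Hamiltonian cycles in the prism graph P_2 × C_n (the Cartesian product of a path on 2 vertices with a cycle on n vertices, n ≥ 3) equals n + 1 + (-1)^n. -/

import Mathlib

open SimpleGraph

/-- The grid cylinder graph `P_m × C_n` on vertex set `Fin m × Fin n`
(rows indexed by `Fin m`, columns cyclically by `Fin n`). -/
def cylGraph (m n : ℕ) : SimpleGraph (Fin m × Fin n) :=
  (SimpleGraph.pathGraph m).boxProd (SimpleGraph.cycleGraph n)

/-- `H` is a Hamiltonian cycle of `G`, encoded as a connected spanning
subgraph in which every vertex has exactly two neighbours. -/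
def IsHamCycleSub {V : Type*} (G H : SimpleGraph V) : Prop :=
  H ≤ G ∧ H.Connected ∧ ∀ v, (H.neighborSet v).ncard = 2

/-- The number of edges of `H` crossing the cut between column `n-1` and column `0`. -/
noncomputable def crossNum (m n : ℕ) [NeZero n] (H : SimpleGraph (Fin m × Fin n)) : ℕ :=
  Set.ncard {i : Fin m | H.Adj (i, -1) (i, 0)}

/-- A cycle drawn on the cylinder is contractible iff it crosses a fixed
meridian cut an even number of times. -/
def IsContractible (m n : ℕ) [NeZero n] (H : SimpleGraph (Fin m × Fin n)) : Prop :=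
  Even (crossNum m n H)

/-- Window `(i, j)` (a square face of `P_{m+1} × C_n`, with corners in rows
`i, i+1` and columns `j, j+1`) lies in the interior of the contractible cycle `H`:
the upward ray from the window crosses an odd number of edges of `H`. -/
def interiorWin (m n : ℕ) [NeZero n] (H : SimpleGraph (Fin (m + 1) × Fin n))
    (w : Fin m × Fin n) : Prop :=
  Odd (Set.ncard {r : Fin (m + 1) | (r : ℕ) ≤ (w.1 : ℕ) ∧ H.Adj (r, w.2) (r, w.2 + 1)})

/-- The split tree of the contractible Hamiltonian cycle `H` has the window
`w_{1,1}` as its up root: the window `(0,0)` is exterior and is connected,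
within the graph induced on exterior windows, to an exterior window in the last row. -/
def UpRootAtOrigin (m n : ℕ) [NeZero m] [NeZero n]
    (H : SimpleGraph (Fin (m + 1) × Fin n)) : Prop :=
  ∃ (h0 : ((0, 0) : Fin m × Fin n) ∈ {w : Fin m × Fin n | ¬ interiorWin m n H w})
    (w : Fin m × Fin n) (hw : w ∈ {w : Fin m × Fin n | ¬ interiorWin m n H w}),
    (w.1 : ℕ) = m - 1 ∧
    ((cylGraph m n).induce {w : Fin m × Fin n | ¬ interiorWin m n H w}).Reachable
      ⟨(0, 0), h0⟩ ⟨w, hw⟩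

open Fin.CommRing

section FinFacts
variable {n : ℕ} [NeZero n]

lemma fin_val_one (hn : 3 ≤ n) : (1 : Fin n).val = 1 := by
  rw [Fin.val_one']; exact Nat.mod_eq_of_lt (by omega)

lemma fin_val_two (hn : 3 ≤ n) : (2 : Fin n).val = 2 := by
  have : ((2:ℕ) : Fin n).val = 2 % n := Fin.val_natCast 2 n
  have h2 : ((2:ℕ) : Fin n) = (2 : Fin n) := by norm_num
  rw [h2] at this
  rw [this]
  exact Nat.mod_eq_of_lt (by omega)

lemma fin_one_ne_zero (hn : 3 ≤ n) : (1 : Fin n) ≠ 0 := by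
  intro h; have := congrArg Fin.val h
  rw [fin_val_one hn, Fin.val_zero] at this; omega

lemma fin_two_ne_zero (hn : 3 ≤ n) : (2 : Fin n) ≠ 0 := by
  intro h; have := congrArg Fin.val h
  rw [fin_val_two hn, Fin.val_zero] at this; omega

lemma fin_add_one_ne (hn : 3 ≤ n) (x : Fin n) : x + 1 ≠ x := by
  intro h
  have : (1 : Fin n) = 0 := by
    have := congrArg (· - x) h
    simpa [add_comm, add_sub_cancel_right, sub_self] using this
  exact fin_one_ne_zero hn this

lemma fin_add_two_ne (hn : 3 ≤ n) (x : Fin n) : x + 2 ≠ x := by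
  intro h
  have : (2 : Fin n) = 0 := by
    have := congrArg (· - x) h
    simpa [add_comm, add_sub_cancel_right, sub_self] using this
  exact fin_two_ne_zero hn this

lemma fin_sub_eq_one_iff {u v : Fin n} : u - v = 1 ↔ u = v + 1 := by
  rw [sub_eq_iff_eq_add, add_comm]

lemma cyl_adj (hn : 3 ≤ n) (x y : Fin 2 × Fin n) :
    (cylGraph 2 n).Adj x y ↔
      (x.1 ≠ y.1 ∧ x.2 = y.2) ∨ (x.1 = y.1 ∧ (y.2 = x.2 + 1 ∨ x.2 = y.2 + 1)) := by
  rw [cylGraph, boxProd_adj]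
  have hval : ∀ u v : Fin n, (u - v).val = 1 ↔ u = v + 1 := by
    intro u v
    rw [← fin_sub_eq_one_iff]
    constructor
    · intro h; exact Fin.ext (by rw [fin_val_one hn]; exact h)
    · intro h; rw [h, fin_val_one hn]
  constructor
  · rintro (⟨h1, h2⟩ | ⟨h1, h2⟩)
    · rw [pathGraph_adj] at h1
      exact Or.inl ⟨Fin.ne_of_val_ne (by omega), h2⟩
    · rw [cycleGraph_adj'] at h1
      refine Or.inr ⟨h2, ?_⟩
      rcases h1 with h | h
      · exact Or.inr ((hval _ _).mp h)
      · exact Or.inl ((hval _ _).mp h)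
  · rintro (⟨h1, h2⟩ | ⟨h1, h2⟩)
    · refine Or.inl ⟨?_, h2⟩
      rw [pathGraph_adj]
      have := Fin.val_ne_iff.mpr h1
      have a := x.1.isLt; have b := y.1.isLt
      omega
    · refine Or.inr ⟨?_, h1⟩
      rw [cycleGraph_adj']
      rcases h2 with h | h
      · exact Or.inr ((hval _ _).mpr h)
      · exact Or.inl ((hval _ _).mpr h)
end FinFacts

section Defs
variable (n : ℕ) [NeZero n]

/-- The Hamiltonian cycle of the prism using rungs at columns `a` and `a+1`. -/
def hamC (a : Fin n) : SimpleGraph (Fin 2 × Fin n) :=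
  SimpleGraph.fromRel (fun x y =>
    (x.1 = y.1 ∧ y.2 = x.2 + 1 ∧ x.2 ≠ a) ∨ (x.2 = y.2 ∧ (x.2 = a ∨ x.2 = a + 1)))

/-- The zigzag (cogwheel) Hamiltonian cycle of the prism (for even `n`). -/
def zigC (b : Bool) : SimpleGraph (Fin 2 × Fin n) :=
  SimpleGraph.fromRel (fun x y =>
    (x.1 = y.1 ∧ y.2 = x.2 + 1 ∧ (x.1 = 0 ↔ (Even (x.2.val) ↔ b = true))) ∨ x.2 = y.2)

end Defs

section AdjChar
variable {n : ℕ} [NeZero n]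

lemma hamC_adj (hn : 3 ≤ n) {a : Fin n} {x y : Fin 2 × Fin n} :
    (hamC n a).Adj x y ↔
      (x.1 = y.1 ∧ ((y.2 = x.2 + 1 ∧ x.2 ≠ a) ∨ (x.2 = y.2 + 1 ∧ y.2 ≠ a))) ∨
      (x.1 ≠ y.1 ∧ x.2 = y.2 ∧ (x.2 = a ∨ x.2 = a + 1)) := by
  rw [hamC, fromRel_adj]
  constructor
  · rintro ⟨hne, (⟨h1, h2, h3⟩ | ⟨h1, h2⟩) | (⟨h1, h2, h3⟩ | ⟨h1, h2⟩)⟩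
    · exact Or.inl ⟨h1, Or.inl ⟨h2, h3⟩⟩
    · refine Or.inr ⟨?_, h1, h2⟩
      intro hh; exact hne (Prod.ext hh h1)
    · exact Or.inl ⟨h1.symm, Or.inr ⟨h2, h3⟩⟩
    · refine Or.inr ⟨?_, h1.symm, h1 ▸ h2⟩
      intro hh; exact hne (Prod.ext hh h1.symm)
  · rintro (⟨h1, (⟨h2, h3⟩ | ⟨h2, h3⟩)⟩ | ⟨h1, h2, h3⟩)
    · refine ⟨?_, Or.inl (Or.inl ⟨h1, h2, h3⟩)⟩
      intro hh; rw [hh] at h2; exact fin_add_one_ne hn y.2 h2.symm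
    · refine ⟨?_, Or.inr (Or.inl ⟨h1.symm, h2, h3⟩)⟩
      intro hh; rw [hh] at h2; exact fin_add_one_ne hn y.2 h2.symm
    · exact ⟨fun hh => h1 (congrArg Prod.fst hh), Or.inl (Or.inr ⟨h2, h3⟩)⟩

lemma zigC_adj (hn : 3 ≤ n) {b : Bool} {x y : Fin 2 × Fin n} :
    (zigC n b).Adj x y ↔
      (x.1 = y.1 ∧ ((y.2 = x.2 + 1 ∧ (x.1 = 0 ↔ (Even (x.2.val) ↔ b = true)))
        ∨ (x.2 = y.2 + 1 ∧ (y.1 = 0 ↔ (Even (y.2.val) ↔ b = true))))) ∨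
      (x.1 ≠ y.1 ∧ x.2 = y.2) := by
  rw [zigC, fromRel_adj]
  constructor
  · rintro ⟨hne, (⟨h1, h2, h3⟩ | h1) | (⟨h1, h2, h3⟩ | h1)⟩
    · exact Or.inl ⟨h1, Or.inl ⟨h2, h3⟩⟩
    · exact Or.inr ⟨fun hh => hne (Prod.ext hh h1), h1⟩
    · exact Or.inl ⟨h1.symm, Or.inr ⟨h2, h1 ▸ h3⟩⟩
    · exact Or.inr ⟨fun hh => hne (Prod.ext hh h1.symm), h1.symm⟩
  · rintro (⟨h1, (⟨h2, h3⟩ | ⟨h2, h3⟩)⟩ | ⟨h1, h2⟩)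
    · refine ⟨?_, Or.inl (Or.inl ⟨h1, h2, h3⟩)⟩
      intro hh; rw [hh] at h2; exact fin_add_one_ne hn y.2 h2.symm
    · refine ⟨?_, Or.inr (Or.inl ⟨h1.symm, h2, h1 ▸ h3⟩)⟩
      intro hh; rw [hh] at h2; exact fin_add_one_ne hn y.2 h2.symm
    · exact ⟨fun hh => h1 (congrArg Prod.fst hh), Or.inl (Or.inr h2)⟩
end AdjChar

section Nbrs
variable {n : ℕ} [NeZero n]

lemma fin2_cases (i : Fin 2) : i = 0 ∨ i = 1 := by omega

lemma fin2_ne (i : Fin 2) : i ≠ 0 → i = 1 := by omega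

lemma fin_sub_add (hn : 3 ≤ n) (j : Fin n) : j - 1 + 1 = j := by ring

lemma fin_add_one_ne_sub_one (hn : 3 ≤ n) (j : Fin n) : j + 1 ≠ j - 1 := by
  intro h
  have h2 : j - 1 + 2 = j + 1 := by ring
  rw [h] at h2
  exact fin_add_two_ne hn _ h2

lemma fin_eq_sub_one (hn : 3 ≤ n) {u j : Fin n} : j = u + 1 ↔ u = j - 1 := by
  constructor
  · intro h; rw [h]; ring
  · intro h; rw [h]; ring

lemma hamC_le (hn : 3 ≤ n) (a : Fin n) : hamC n a ≤ cylGraph 2 n := by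
  intro x y h
  rw [hamC_adj hn] at h
  rw [cyl_adj hn]
  tauto

lemma zigC_le (hn : 3 ≤ n) (b : Bool) : zigC n b ≤ cylGraph 2 n := by
  intro x y h
  rw [zigC_adj hn] at h
  rw [cyl_adj hn]
  tauto

lemma hamC_nbr_0a (hn : 3 ≤ n) (a : Fin n) :
    (hamC n a).neighborSet ((0 : Fin 2), a) = {((0:Fin 2), a - 1), ((1:Fin 2), a)} := by
  ext u
  rw [mem_neighborSet, hamC_adj hn]
  simp only [Set.mem_insert_iff, Set.mem_singleton_iff, Prod.ext_iff]
  constructor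
  · rintro (⟨h1, (⟨h2, h3⟩ | ⟨h2, h3⟩)⟩ | ⟨h1, h2, h3⟩)
    · exact absurd rfl h3
    · exact Or.inl ⟨h1.symm, (fin_eq_sub_one hn).mp h2⟩
    · exact Or.inr ⟨fin2_ne u.1 (fun hh => h1 hh.symm), h2.symm⟩
  · rintro (⟨h1, h2⟩ | ⟨h1, h2⟩)
    · exact Or.inl ⟨h1.symm, Or.inr ⟨(fin_eq_sub_one hn).mpr h2, by
        rw [h2]; intro hh
        have := fin_sub_add hn a
        rw [hh] at this
        exact fin_add_one_ne hn a this⟩⟩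
    · exact Or.inr ⟨by rw [h1]; decide, h2.symm, Or.inl trivial⟩

lemma hamC_nbr_1a (hn : 3 ≤ n) (a : Fin n) :
    (hamC n a).neighborSet ((1 : Fin 2), a) = {((1:Fin 2), a - 1), ((0:Fin 2), a)} := by
  ext u
  rw [mem_neighborSet, hamC_adj hn]
  simp only [Set.mem_insert_iff, Set.mem_singleton_iff, Prod.ext_iff]
  constructor
  · rintro (⟨h1, (⟨h2, h3⟩ | ⟨h2, h3⟩)⟩ | ⟨h1, h2, h3⟩)
    · exact absurd rfl h3
    · exact Or.inl ⟨h1.symm, (fin_eq_sub_one hn).mp h2⟩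
    · refine Or.inr ⟨?_, h2.symm⟩
      rcases fin2_cases u.1 with h | h
      · exact h
      · exact absurd h.symm h1
  · rintro (⟨h1, h2⟩ | ⟨h1, h2⟩)
    · exact Or.inl ⟨h1.symm, Or.inr ⟨(fin_eq_sub_one hn).mpr h2, by
        rw [h2]; intro hh
        have := fin_sub_add hn a
        rw [hh] at this
        exact fin_add_one_ne hn a this⟩⟩
    · exact Or.inr ⟨by rw [h1]; decide, h2.symm, Or.inl trivial⟩

lemma hamC_nbr_0a1 (hn : 3 ≤ n) (a : Fin n) :
    (hamC n a).neighborSet ((0 : Fin 2), a + 1) = {((0:Fin 2), a + 2), ((1:Fin 2), a + 1)} := by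
  ext u
  rw [mem_neighborSet, hamC_adj hn]
  simp only [Set.mem_insert_iff, Set.mem_singleton_iff, Prod.ext_iff]
  have hne : a + 1 ≠ a := fin_add_one_ne hn a
  constructor
  · rintro (⟨h1, (⟨h2, h3⟩ | ⟨h2, h3⟩)⟩ | ⟨h1, h2, h3⟩)
    · exact Or.inl ⟨h1.symm, by rw [h2]; ring⟩
    · exfalso
      apply h3
      have : u.2 + 1 = a + 1 := h2.symm
      exact add_right_cancel this
    · exact Or.inr ⟨fin2_ne u.1 (fun hh => h1 hh.symm), h2.symm⟩
  · rintro (⟨h1, h2⟩ | ⟨h1, h2⟩)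
    · exact Or.inl ⟨h1.symm, Or.inl ⟨by rw [h2]; ring, hne⟩⟩
    · exact Or.inr ⟨by rw [h1]; decide, h2.symm, Or.inr trivial⟩

lemma hamC_nbr_1a1 (hn : 3 ≤ n) (a : Fin n) :
    (hamC n a).neighborSet ((1 : Fin 2), a + 1) = {((1:Fin 2), a + 2), ((0:Fin 2), a + 1)} := by
  ext u
  rw [mem_neighborSet, hamC_adj hn]
  simp only [Set.mem_insert_iff, Set.mem_singleton_iff, Prod.ext_iff]
  have hne : a + 1 ≠ a := fin_add_one_ne hn a
  constructor
  · rintro (⟨h1, (⟨h2, h3⟩ | ⟨h2, h3⟩)⟩ | ⟨h1, h2, h3⟩)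
    · exact Or.inl ⟨h1.symm, by rw [h2]; ring⟩
    · exfalso
      apply h3
      have : u.2 + 1 = a + 1 := h2.symm
      exact add_right_cancel this
    · refine Or.inr ⟨?_, h2.symm⟩
      rcases fin2_cases u.1 with h | h
      · exact h
      · exact absurd h.symm h1
  · rintro (⟨h1, h2⟩ | ⟨h1, h2⟩)
    · exact Or.inl ⟨h1.symm, Or.inl ⟨by rw [h2]; ring, hne⟩⟩
    · exact Or.inr ⟨by rw [h1]; decide, h2.symm, Or.inr trivial⟩

lemma hamC_nbr_gen (hn : 3 ≤ n) (a : Fin n) (i : Fin 2) {j : Fin n}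
    (hja : j ≠ a) (hja1 : j ≠ a + 1) :
    (hamC n a).neighborSet (i, j) = {(i, j + 1), (i, j - 1)} := by
  ext u
  rw [mem_neighborSet, hamC_adj hn]
  simp only [Set.mem_insert_iff, Set.mem_singleton_iff, Prod.ext_iff]
  constructor
  · rintro (⟨h1, (⟨h2, h3⟩ | ⟨h2, h3⟩)⟩ | ⟨h1, h2, h3⟩)
    · exact Or.inl ⟨h1.symm, h2⟩
    · exact Or.inr ⟨h1.symm, (fin_eq_sub_one hn).mp h2⟩
    · exact absurd h3 (by push_neg; exact ⟨hja, hja1⟩)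
  · rintro (⟨h1, h2⟩ | ⟨h1, h2⟩)
    · exact Or.inl ⟨h1.symm, Or.inl ⟨h2, hja⟩⟩
    · refine Or.inl ⟨h1.symm, Or.inr ⟨(fin_eq_sub_one hn).mpr h2, ?_⟩⟩
      rw [h2]
      intro hh
      apply hja1
      rw [← hh]
      exact (fin_sub_add hn j).symm

lemma hamC_deg (hn : 3 ≤ n) (a : Fin n) (v : Fin 2 × Fin n) :
    ((hamC n a).neighborSet v).ncard = 2 := by
  obtain ⟨i, j⟩ := v
  have hd : ((0:Fin 2), a) ≠ ((1:Fin 2), a) := by simp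
  by_cases hja : j = a
  · rcases fin2_cases i with h | h <;> subst h <;> rw [hja]
    · rw [hamC_nbr_0a hn a]
      exact Set.ncard_pair (by simp)
    · rw [hamC_nbr_1a hn a]
      exact Set.ncard_pair (by simp)
  · by_cases hja1 : j = a + 1
    · rcases fin2_cases i with h | h <;> subst h <;> rw [hja1]
      · rw [hamC_nbr_0a1 hn a]
        exact Set.ncard_pair (by simp)
      · rw [hamC_nbr_1a1 hn a]
        exact Set.ncard_pair (by simp)
    · rw [hamC_nbr_gen hn a i hja hja1]
      exact Set.ncard_pair (by
        simp only [ne_eq, Prod.mk.injEq, not_and]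
        intro _
        exact fin_add_one_ne_sub_one hn j)
end Nbrs

section ZigNbrs
variable {n : ℕ} [NeZero n]

lemma fin_val_add_one (hn : 3 ≤ n) (j : Fin n) :
    (j + 1).val = if j.val = n - 1 then 0 else j.val + 1 := by
  have : (j + 1).val = (j.val + 1) % n := by
    rw [Fin.add_def, fin_val_one hn]
  rw [this]
  split
  · rename_i h; rw [h]; simp [Nat.sub_add_cancel (by omega : 1 ≤ n)]
  · rename_i h
    have := j.isLt
    exact Nat.mod_eq_of_lt (by omega)

lemma parity_sub_one (hn : 3 ≤ n) (hev : Even n) (j : Fin n) :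
    Even ((j - 1).val) ↔ ¬ Even j.val := by
  have hj : j = (j - 1) + 1 := by ring
  set k := (j - 1).val with hk
  have hkn : k < n := (j-1).isLt
  have hval : j.val = if k = n - 1 then 0 else k + 1 := by
    conv_lhs => rw [hj]
    exact fin_val_add_one hn (j - 1)
  rw [Nat.even_iff, Nat.even_iff]
  rcases Nat.even_iff.mp hev with hn2
  split at hval <;> omega

lemma zigC_nbr (hn : 3 ≤ n) (hev : Even n) (b : Bool) (i : Fin 2) (j : Fin n) :
    (zigC n b).neighborSet (i, j) =
      {(1 - i, j), (i, if ((i = 0) ↔ (Even j.val ↔ b = true)) then j + 1 else j - 1)} := by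
  have hpar := parity_sub_one hn hev j
  have hsub := fin_sub_add hn j
  ext u
  rw [mem_neighborSet, zigC_adj hn]
  simp only [Set.mem_insert_iff, Set.mem_singleton_iff, Prod.ext_iff]
  have h2 : ∀ v : Fin 2, v ≠ i → v = 1 - i := by
    intro v hv
    rcases fin2_cases i with h | h <;> rcases fin2_cases v with h' | h' <;>
      simp_all <;> omega
  constructor
  · rintro (⟨h1, (⟨h2', h3⟩ | ⟨h2', h3⟩)⟩ | ⟨h1, h2'⟩)
    · refine Or.inr ⟨h1.symm, ?_⟩
      rw [if_pos h3]
      exact h2'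
    · refine Or.inr ⟨h1.symm, ?_⟩
      have hu2 : u.2 = j - 1 := (fin_eq_sub_one hn).mp h2'
      rw [← h1] at h3
      rw [hu2] at h3
      have : ¬ ((i = 0) ↔ (Even j.val ↔ b = true)) := by
        rw [hpar] at h3; tauto
      rw [if_neg this]
      exact hu2
    · exact Or.inl ⟨h2 u.1 (fun hh => h1 hh.symm), h2'.symm⟩
  · rintro (⟨h1, h2'⟩ | ⟨h1, h2'⟩)
    · refine Or.inr ⟨?_, h2'.symm⟩
      rw [h1]
      rcases fin2_cases i with h | h <;> rw [h] <;> decide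
    · by_cases hc : ((i = 0) ↔ (Even j.val ↔ b = true))
      · rw [if_pos hc] at h2'
        exact Or.inl ⟨h1.symm, Or.inl ⟨h2', hc⟩⟩
      · rw [if_neg hc] at h2'
        refine Or.inl ⟨h1.symm, Or.inr ⟨by rw [h2', hsub], ?_⟩⟩
        rw [h1, h2', hpar]
        tauto

lemma zigC_deg (hn : 3 ≤ n) (hev : Even n) (b : Bool) (v : Fin 2 × Fin n) :
    ((zigC n b).neighborSet v).ncard = 2 := by
  obtain ⟨i, j⟩ := v
  rw [zigC_nbr hn hev b i j]
  refine Set.ncard_pair ?_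
  simp only [ne_eq, Prod.mk.injEq, not_and]
  intro h
  exfalso
  rcases fin2_cases i with hh | hh <;> rw [hh] at h <;> simp at h <;> omega
end ZigNbrs

section Conn
variable {n : ℕ} [NeZero n]

lemma reach_closed {V : Type*} {H : SimpleGraph V} {S : Set V}
    (hcl : ∀ x y, H.Adj x y → x ∈ S → y ∈ S) {u v : V}
    (h : H.Reachable u v) (hu : u ∈ S) : v ∈ S := by
  obtain ⟨w⟩ := h
  induction w with
  | nil => exact hu
  | cons adj _ ih => exact ih (hcl _ _ adj hu)

lemma fin_cast_succ (k : ℕ) : ((k + 1 : ℕ) : Fin n) = (k : Fin n) + 1 := by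
  push_cast
  ring

lemma hamC_reach (hn : 3 ≤ n) (a : Fin n) (i : Fin 2) :
    ∀ k : ℕ, k < n → (hamC n a).Reachable (i, a + 1) (i, a + 1 + (k : Fin n)) := by
  intro k
  induction k with
  | zero => intro _; simpa using Reachable.refl (i, a+1)
  | succ k ih =>
    intro hk
    have hreach := ih (by omega)
    refine hreach.trans (Adj.reachable ?_)
    rw [hamC_adj hn]
    refine Or.inl ⟨rfl, Or.inl ⟨?_, ?_⟩⟩
    · rw [fin_cast_succ]; ring
    · intro hcontra
      have h0 : ((k + 1 : ℕ) : Fin n) = 0 := by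
        rw [fin_cast_succ]
        have : (1 : Fin n) + (k : Fin n) = 0 := by
          have := congrArg (· - a) hcontra
          simp only at this
          rw [show a + 1 + (k:Fin n) - a = 1 + (k:Fin n) by ring,
            show a - a = (0 : Fin n) by ring] at this
          exact this
        rw [add_comm] at this
        exact this
      have := congrArg Fin.val h0
      rw [Fin.val_natCast, Fin.val_zero, Nat.mod_eq_of_lt hk] at this
      omega

lemma hamC_conn (hn : 3 ≤ n) (a : Fin n) : (hamC n a).Connected := by
  rw [connected_iff]
  refine ⟨?_, ⟨((0:Fin 2), a)⟩⟩
  have key : ∀ z : Fin 2 × Fin n, (hamC n a).Reachable ((0:Fin 2), a + 1) z := by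
    rintro ⟨i, j⟩
    have hrung : (hamC n a).Adj ((0:Fin 2), a + 1) ((1:Fin 2), a + 1) := by
      rw [hamC_adj hn]
      exact Or.inr ⟨(by decide : (0:Fin 2) ≠ (1:Fin 2)), rfl, Or.inr rfl⟩
    have hrow : (hamC n a).Reachable ((0:Fin 2), a + 1) (i, a + 1) := by
      rcases fin2_cases i with h | h <;> subst h
      · exact Reachable.refl _
      · exact hrung.reachable
    refine hrow.trans ?_
    have hj : j = a + 1 + ((j - (a + 1)).val : Fin n) := by
      rw [Fin.cast_val_eq_self]
      ring
    rw [hj] at *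
    exact hamC_reach hn a i _ (j - (a+1)).isLt
  intro x y
  exact (key x).symm.trans (key y)

lemma zigC_reach_step (hn : 3 ≤ n) (b : Bool) (j : Fin n) (i i' : Fin 2) :
    (zigC n b).Reachable (i, j) (i', j + 1) := by
  have hrung : ∀ (u v : Fin 2) (l : Fin n), u ≠ v → (zigC n b).Adj (u, l) (v, l) := by
    intro u v l huv
    rw [zigC_adj hn]
    exact Or.inr ⟨huv, rfl⟩
  have hcol : ∀ (u v : Fin 2) (l : Fin n), (zigC n b).Reachable (u, l) (v, l) := by
    intro u v l
    by_cases h : u = v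
    · rw [h]
    · exact (hrung u v l h).reachable
  by_cases hc : (Even j.val ↔ b = true)
  · have : (zigC n b).Adj ((0:Fin 2), j) ((0:Fin 2), j + 1) := by
      rw [zigC_adj hn]
      exact Or.inl ⟨rfl, Or.inl ⟨rfl, by simpa using hc⟩⟩
    exact (hcol i 0 j).trans (this.reachable.trans (hcol 0 i' (j+1)))
  · have : (zigC n b).Adj ((1:Fin 2), j) ((1:Fin 2), j + 1) := by
      rw [zigC_adj hn]
      refine Or.inl ⟨rfl, Or.inl ⟨rfl, ?_⟩⟩
      simp only [show ((1:Fin 2) = 0) ↔ False by decide]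
      tauto
    exact (hcol i 1 j).trans (this.reachable.trans (hcol 1 i' (j+1)))

lemma zigC_conn (hn : 3 ≤ n) (b : Bool) : (zigC n b).Connected := by
  rw [connected_iff]
  refine ⟨?_, ⟨((0:Fin 2), 0)⟩⟩
  have key : ∀ k : ℕ, (zigC n b).Reachable ((0:Fin 2), 0) ((0:Fin 2), (k : Fin n)) := by
    intro k
    induction k with
    | zero => simpa using Reachable.refl (((0:Fin 2), (0:Fin n)) : Fin 2 × Fin n)
    | succ k ih =>
      rw [fin_cast_succ]
      exact ih.trans (zigC_reach_step hn b _ 0 0)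
  have key2 : ∀ z : Fin 2 × Fin n, (zigC n b).Reachable ((0:Fin 2), 0) z := by
    rintro ⟨i, j⟩
    have : (zigC n b).Reachable ((0:Fin 2), j) (i, j) := by
      by_cases h : (0 : Fin 2) = i
      · rw [h]
      · refine Adj.reachable ?_
        rw [zigC_adj hn]
        exact Or.inr ⟨h, rfl⟩
    refine Reachable.trans ?_ this
    have := key j.val
    rwa [Fin.cast_val_eq_self] at this
  intro x y
  exact (key2 x).symm.trans (key2 y)
end Conn

section Classify
variable {n : ℕ} [NeZero n]

lemma ncard_le_one_of_subset_singleton {α : Type*} {s : Set α} {w : α}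
    (h : s ⊆ {w}) : s.ncard ≤ 1 := by
  calc s.ncard ≤ ({w} : Set α).ncard := Set.ncard_le_ncard h (Set.finite_singleton w)
  _ = 1 := Set.ncard_singleton w

lemma triple_two {α : Type*} {x y z : α} (hxy : x ≠ y) (hxz : x ≠ z) (hyz : y ≠ z)
    {s : Set α} (hsub : s ⊆ {x, y, z}) (h2 : s.ncard = 2) :
    (x ∈ s ∧ y ∈ s ∧ z ∉ s) ∨ (x ∈ s ∧ y ∉ s ∧ z ∈ s) ∨ (x ∉ s ∧ y ∈ s ∧ z ∈ s) := by
  have hfin : s.Finite := Set.Finite.subset (Set.toFinite {x, y, z}) hsub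
  by_cases hx : x ∈ s <;> by_cases hy : y ∈ s <;> by_cases hz : z ∈ s
  · exfalso
    have h3 : ({x, y, z} : Set α).ncard = 3 := by
      rw [Set.ncard_eq_three]; exact ⟨x, y, z, hxy, hxz, hyz, rfl⟩
    have hle3 : ({x, y, z} : Set α).ncard ≤ s.ncard := by
      apply Set.ncard_le_ncard _ hfin
      intro u hu
      rcases hu with h | h | h
      · rwa [h]
      · rwa [h]
      · rw [Set.mem_singleton_iff] at h; rwa [h]
    omega
  · exact Or.inl ⟨hx, hy, hz⟩
  · exact Or.inr (Or.inl ⟨hx, hy, hz⟩)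
  · exfalso
    have : s ⊆ {x} := by
      intro u hu
      rcases hsub hu with h | h | h
      · exact h
      · exact absurd (h ▸ hu) hy
      · rw [Set.mem_singleton_iff] at h; exact absurd (h ▸ hu) hz
    have := ncard_le_one_of_subset_singleton this
    omega
  · exact Or.inr (Or.inr ⟨hx, hy, hz⟩)
  · exfalso
    have : s ⊆ {y} := by
      intro u hu
      rcases hsub hu with h | h | h
      · exact absurd (h ▸ hu) hx
      · exact h
      · rw [Set.mem_singleton_iff] at h; exact absurd (h ▸ hu) hz
    have := ncard_le_one_of_subset_singleton this
    omega
  · exfalso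
    have : s ⊆ {z} := by
      intro u hu
      rcases hsub hu with h | h | h
      · exact absurd (h ▸ hu) hx
      · exact absurd (h ▸ hu) hy
      · exact h
    have := ncard_le_one_of_subset_singleton this
    omega
  · exfalso
    have : s ⊆ (∅ : Set α) := by
      intro u hu
      rcases hsub hu with h | h | h
      · exact absurd (h ▸ hu) hx
      · exact absurd (h ▸ hu) hy
      · rw [Set.mem_singleton_iff] at h; exact absurd (h ▸ hu) hz
    have h0 : s.ncard = 0 := by
      rw [Set.subset_empty_iff.mp this]
      exact Set.ncard_empty _
    omega

lemma fin2_other {i u : Fin 2} (h : u ≠ i) : u = 1 - i := by omega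

lemma key_row (hn : 3 ≤ n) {H : SimpleGraph (Fin 2 × Fin n)}
    (hle : H ≤ cylGraph 2 n) (hdeg : ∀ v, (H.neighborSet v).ncard = 2)
    (i : Fin 2) (j : Fin n) :
    (H.Adj (i, j+1) (1 - i, j+1) ∧ H.Adj (i, j+1) (i, j+1+1) ∧ ¬ H.Adj (i, j) (i, j+1)) ∨
    (H.Adj (i, j+1) (1 - i, j+1) ∧ ¬ H.Adj (i, j+1) (i, j+1+1) ∧ H.Adj (i, j) (i, j+1)) ∨
    (¬ H.Adj (i, j+1) (1 - i, j+1) ∧ H.Adj (i, j+1) (i, j+1+1) ∧ H.Adj (i, j) (i, j+1)) := by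
  have hii : (1 - i : Fin 2) ≠ i := by omega
  have hsub : H.neighborSet (i, j+1) ⊆ {(1 - i, j+1), (i, j+1+1), (i, j)} := by
    intro u hu
    have hc := hle hu
    rw [cyl_adj hn] at hc
    rcases hc with ⟨h1, h2⟩ | ⟨h1, h2⟩
    · left
      have := fin2_other (fun hh => h1 hh.symm)
      exact Prod.ext this h2.symm
    · rcases h2 with h | h
      · right; left; exact Prod.ext h1.symm h
      · right; right
        refine Prod.ext h1.symm ?_
        have : u.2 = (j + 1) - 1 := (fin_eq_sub_one hn).mp h
        rw [this]; ring
  have hd1 : ((1 - i : Fin 2), j+1) ≠ (i, j+1+1) := fun h => hii (congrArg Prod.fst h)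
  have hd2 : ((1 - i : Fin 2), j+1) ≠ (i, j) := fun h => hii (congrArg Prod.fst h)
  have hd3 : ((i : Fin 2), j+1+1) ≠ (i, j) := by
    intro h
    exact fin_add_two_ne hn j (by
      have := congrArg Prod.snd h
      simpa [add_assoc, one_add_one_eq_two] using this)
  have := triple_two hd1 hd2 hd3 hsub (hdeg (i, j+1))
  simp only [mem_neighborSet] at this
  rcases this with ⟨h1, h2, h3⟩ | ⟨h1, h2, h3⟩ | ⟨h1, h2, h3⟩
  · exact Or.inl ⟨h1, h2, fun hh => h3 hh.symm⟩
  · exact Or.inr (Or.inl ⟨h1, h2, h3.symm⟩)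
  · exact Or.inr (Or.inr ⟨h1, h2, h3.symm⟩)
end Classify

section Gaps
variable {n : ℕ} [NeZero n]

lemma fin_val_ne_zero {w : Fin n} (h : w ≠ 0) : w.val ≠ 0 := by
  intro hh; exact h (Fin.ext hh)

lemma fin_sub_cancel_iff {u v w : Fin n} : u - w = v - w ↔ u = v := by
  constructor
  · intro h
    have := congrArg (· + w) h
    simpa using this
  · intro h; rw [h]

lemma no_two_gaps (hn : 3 ≤ n) {H : SimpleGraph (Fin 2 × Fin n)}
    (hle : H ≤ cylGraph 2 n) (hconn : H.Connected)
    {a a' : Fin n} (haa : a ≠ a')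
    (hTa : ¬ H.Adj (0, a) (0, a + 1)) (hBa : ¬ H.Adj (1, a) (1, a + 1))
    (hTa' : ¬ H.Adj (0, a') (0, a' + 1)) (hBa' : ¬ H.Adj (1, a') (1, a' + 1)) : False := by
  set d := (a' - a).val with hd
  set f : Fin n → ℕ := fun j => (j - (a + 1)).val with hf
  have hd1 : 1 ≤ d := by
    rcases Nat.eq_zero_or_pos d with h | h
    · exfalso
      have : a' - a = 0 := Fin.ext (by rw [Fin.val_zero]; exact h)
      have : a' = a := by
        have := congrArg (· + a) this
        simpa using this
      exact haa this.symm
    · exact h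
  have hdn : d ≤ n - 1 := by
    have := (a' - a).isLt
    omega
  have haval : ∀ j : Fin n, j = a ↔ f j = n - 1 := by
    intro j
    have hfa : f a = n - 1 := by
      show (a - (a + 1)).val = n - 1
      have h1 : (a - (a + 1)) + 1 = 0 := by ring
      have := fin_val_add_one hn (a - (a + 1))
      rw [h1] at this
      simp only [Fin.val_zero] at this
      by_cases hc : (a - (a+1)).val = n - 1
      · exact hc
      · rw [if_neg hc] at this; omega
    constructor
    · intro h; rw [h]; exact hfa
    · intro h
      have hv : f j = f a := by omega
      exact fin_sub_cancel_iff.mp (Fin.ext hv)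
  have ha'val : ∀ j : Fin n, j = a' ↔ f j = d - 1 := by
    intro j
    have hfa' : f a' = d - 1 := by
      show (a' - (a + 1)).val = d - 1
      have h1 : (a' - (a + 1)) + 1 = a' - a := by ring
      have h2 := fin_val_add_one hn (a' - (a + 1))
      rw [h1] at h2
      by_cases hc : (a' - (a+1)).val = n - 1
      · rw [if_pos hc] at h2; omega
      · rw [if_neg hc] at h2
        omega
    constructor
    · intro h; rw [h]; exact hfa'
    · intro h
      have hv : f j = f a' := by omega
      exact fin_sub_cancel_iff.mp (Fin.ext hv)
  have hstep : ∀ j : Fin n, j ≠ a → j ≠ a' → (f j < d ↔ f (j + 1) < d) := by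
    intro j hja hja'
    have h1 : f (j + 1) = if f j = n - 1 then 0 else f j + 1 := by
      have : (j + 1) - (a + 1) = (j - (a + 1)) + 1 := by ring
      show ((j+1) - (a+1)).val = _
      rw [this]
      exact fin_val_add_one hn (j - (a + 1))
    have h2 : f j ≠ n - 1 := fun hh => hja ((haval j).mpr hh)
    have h3 : f j ≠ d - 1 := fun hh => hja' ((ha'val j).mpr hh)
    rw [if_neg h2] at h1
    omega
  -- the edge predicate: any H-edge within a row at column c forces c ∉ {a, a'}
  have hedge : ∀ (i : Fin 2) (c : Fin n), H.Adj (i, c) (i, c + 1) → c ≠ a ∧ c ≠ a' := by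
    intro i c hadj
    rcases fin2_cases i with h | h <;> subst h
    · exact ⟨fun hh => hTa (hh ▸ hadj), fun hh => hTa' (hh ▸ hadj)⟩
    · exact ⟨fun hh => hBa (hh ▸ hadj), fun hh => hBa' (hh ▸ hadj)⟩
  set S : Set (Fin 2 × Fin n) := {x | f x.2 < d} with hS
  have hclosed : ∀ x y, H.Adj x y → x ∈ S → y ∈ S := by
    rintro ⟨x1, x2⟩ ⟨y1, y2⟩ hadj hx
    have hc := hle hadj
    rw [cyl_adj hn] at hc
    rcases hc with ⟨h1, h2⟩ | ⟨h1, h2⟩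
    · simp only [hS, Set.mem_setOf_eq] at *
      rw [← h2]; exact hx
    · simp only at h1
      subst h1
      rcases h2 with h | h
    
      · simp only at h; subst h
        obtain ⟨hja, hja'⟩ := hedge x1 x2 hadj
        simp only [hS, Set.mem_setOf_eq] at *
        exact (hstep x2 hja hja').mp hx
      · simp only at h; subst h
        obtain ⟨hja, hja'⟩ := hedge x1 y2 hadj.symm
        simp only [hS, Set.mem_setOf_eq] at *
        exact (hstep y2 hja hja').mpr hx
  have hin : ((0 : Fin 2), a + 1) ∈ S := by
    simp only [hS, Set.mem_setOf_eq]
    have : f (a + 1) = 0 := by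
      show ((a+1) - (a+1)).val = 0
      rw [sub_self]
      rfl
    omega
  have hout : ((0 : Fin 2), a) ∉ S := by
    simp only [hS, Set.mem_setOf_eq]
    have := (haval a).mp rfl
    omega
  exact hout (reach_closed hclosed (hconn.preconnected _ _) hin)
end Gaps

section Main
variable {n : ℕ} [NeZero n]

lemma classify (hn : 3 ≤ n) {H : SimpleGraph (Fin 2 × Fin n)}
    (hH : IsHamCycleSub (cylGraph 2 n) H) :
    (∃ a, H = hamC n a) ∨ (Even n ∧ ∃ b, H = zigC n b) := by
  obtain ⟨hle, hconn, hdeg⟩ := hH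
  set T : Fin n → Prop := fun j => H.Adj (0, j) (0, j + 1) with hTdef
  set B : Fin n → Prop := fun j => H.Adj (1, j) (1, j + 1) with hBdef
  set R : Fin n → Prop := fun j => H.Adj (0, j) (1, j) with hRdef
  have keyT : ∀ j : Fin n, (R (j+1) ∧ T (j+1) ∧ ¬ T j) ∨ (R (j+1) ∧ ¬T (j+1) ∧ T j) ∨
      (¬R (j+1) ∧ T (j+1) ∧ T j) := by
    intro j
    have h := key_row hn hle hdeg 0 j
    rw [show (1 - (0:Fin 2)) = 1 by decide] at h
    exact h
  have keyB : ∀ j : Fin n, (R (j+1) ∧ B (j+1) ∧ ¬ B j) ∨ (R (j+1) ∧ ¬B (j+1) ∧ B j) ∨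
      (¬R (j+1) ∧ B (j+1) ∧ B j) := by
    intro j
    have h := key_row hn hle hdeg 1 j
    rw [show (1 - (1:Fin 2)) = 0 by decide] at h
    rcases h with ⟨h1,h2,h3⟩|⟨h1,h2,h3⟩|⟨h1,h2,h3⟩
    · exact Or.inl ⟨h1.symm, h2, h3⟩
    · exact Or.inr (Or.inl ⟨h1.symm, h2, h3⟩)
    · exact Or.inr (Or.inr ⟨fun hh => h1 hh.symm, h2, h3⟩)
  have surj : ∀ j : Fin n, ∃ k : Fin n, j = k + 1 := fun j => ⟨j - 1, by ring⟩
  have hTBstep : ∀ j : Fin n, ((T j ↔ B j) ↔ (T (j+1) ↔ B (j+1))) := by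
    intro j
    rcases keyT j with ⟨h1,h2,h3⟩|⟨h1,h2,h3⟩|⟨h1,h2,h3⟩ <;>
      rcases keyB j with ⟨g1,g2,g3⟩|⟨g1,g2,g3⟩|⟨g1,g2,g3⟩ <;> tauto
  have hTBconst : ∀ j : Fin n, ((T 0 ↔ B 0) ↔ (T j ↔ B j)) := by
    have hk : ∀ k : ℕ, ((T 0 ↔ B 0) ↔ (T (k : Fin n) ↔ B (k : Fin n))) := by
      intro k
      induction k with
      | zero => rw [Nat.cast_zero]
      | succ k ih => rw [fin_cast_succ]; exact ih.trans (hTBstep _)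
    intro j
    have h := hk j.val
    rwa [Fin.cast_val_eq_self] at h
  by_cases hTB0 : (T 0 ↔ B 0)
  · -- top and bottom rows agree
    have hA : ∀ j, (T j ↔ B j) := fun j => (hTBconst j).mp hTB0
    by_cases hall : ∀ j, T j
    · exfalso
      have hnoR : ∀ j, ¬ R j := by
        intro j
        obtain ⟨k, rfl⟩ := surj j
        rcases keyT k with ⟨h1,h2,h3⟩|⟨h1,h2,h3⟩|⟨h1,h2,h3⟩
        · exact absurd (hall k) h3
        · exact absurd (hall (k+1)) h2
        · exact h1
      have hclosed : ∀ x y : Fin 2 × Fin n,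
          H.Adj x y → x ∈ {z : Fin 2 × Fin n | z.1 = 0} → y ∈ {z : Fin 2 × Fin n | z.1 = 0} := by
        rintro ⟨x1,x2⟩ ⟨y1,y2⟩ hadj hx
        have hc := hle hadj
        rw [cyl_adj hn] at hc
        simp only [Set.mem_setOf_eq] at hx ⊢
        subst hx
        rcases hc with ⟨h1, h2⟩ | ⟨h1, h2⟩
        · exfalso
          simp only at h1 h2
          subst h2
          have hy1 : y1 = 1 := by omega
          subst hy1
          exact hnoR x2 hadj
        · simp only at h1
          exact h1.symm
      have hmem := reach_closed hclosed
        (hconn.preconnected ((0:Fin 2), (0:Fin n)) ((1:Fin 2), (0:Fin n))) rfl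
      simp only [Set.mem_setOf_eq] at hmem
      exact (by decide : ¬((1:Fin 2) = 0)) hmem
    · push_neg at hall
      obtain ⟨a, ha⟩ := hall
      have huniq : ∀ j, j ≠ a → T j := by
        intro j hja
        by_contra hTj
        exact no_two_gaps hn hle hconn (fun h : a = j => hja h.symm)
          ha (fun h => ha ((hA a).mpr h)) hTj (fun h => hTj ((hA j).mpr h))
      have hTiff : ∀ j, T j ↔ j ≠ a := fun j =>
        ⟨fun h hh => ha (hh ▸ h), huniq j⟩
      have hRiff : ∀ j, R j ↔ (j = a ∨ j = a + 1) := by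
        intro j
        obtain ⟨k, rfl⟩ := surj j
        constructor
        · intro hRk
          rcases keyT k with ⟨h1,h2,h3⟩|⟨h1,h2,h3⟩|⟨h1,h2,h3⟩
          · right
            have hka : k = a := by_contra fun hh => h3 (huniq k hh)
            rw [hka]
          · left
            exact by_contra fun hh => h2 (huniq _ hh)
          · exact absurd hRk h1
        · intro hk
          rcases keyT k with ⟨h1,h2,h3⟩|⟨h1,h2,h3⟩|⟨h1,h2,h3⟩
          · exact h1
          · exact h1
          · exfalso
            rcases hk with hk | hk
            · exact (hTiff (k+1)).mp h2 hk
            · have hka : k = a := add_right_cancel hk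
              exact (hTiff k).mp h3 hka
      have hBiff : ∀ j, B j ↔ j ≠ a := fun j =>
        ⟨fun h => (hTiff j).mp ((hA j).mpr h), fun h => (hA j).mp ((hTiff j).mpr h)⟩
      left
      refine ⟨a, ?_⟩
      ext ⟨x1, x2⟩ ⟨y1, y2⟩
      rw [hamC_adj hn]
      simp only
      constructor
      · intro hadj
        have hc := hle hadj
        rw [cyl_adj hn] at hc
        simp only at hc
        rcases hc with ⟨h1, h2⟩ | ⟨h1, h2⟩
        · subst h2
          refine Or.inr ⟨h1, rfl, ?_⟩
          rcases fin2_cases x1 with hx | hx <;> subst hx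
          · have hy : y1 = 1 := by omega
            subst hy
            exact (hRiff x2).mp hadj
          · have hy : y1 = 0 := by omega
            subst hy
            exact (hRiff x2).mp hadj.symm
        · subst h1
          refine Or.inl ⟨rfl, ?_⟩
          rcases h2 with h | h
          · subst h
            refine Or.inl ⟨rfl, ?_⟩
            rcases fin2_cases x1 with hx | hx <;> subst hx
            · exact (hTiff x2).mp hadj
            · exact (hBiff x2).mp hadj
          · subst h
            refine Or.inr ⟨rfl, ?_⟩
            rcases fin2_cases x1 with hx | hx <;> subst hx
            · exact (hTiff y2).mp hadj.symm
            · exact (hBiff y2).mp hadj.symm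
      · rintro (⟨h1, (⟨h2, h3⟩ | ⟨h2, h3⟩)⟩ | ⟨h1, h2, h3⟩)
        · subst h1; subst h2
          rcases fin2_cases x1 with hx | hx <;> subst hx
          · exact (hTiff x2).mpr h3
          · exact (hBiff x2).mpr h3
        · subst h1; subst h2
          rcases fin2_cases x1 with hx | hx <;> subst hx
          · exact ((hTiff y2).mpr h3).symm
          · exact ((hBiff y2).mpr h3).symm
        · subst h2
          rcases fin2_cases x1 with hx | hx <;> subst hx
          · have hy : y1 = 1 := by omega
            subst hy
            exact (hRiff x2).mpr h3
          · have hy : y1 = 0 := by omega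
            subst hy
            exact ((hRiff x2).mpr h3).symm
  · -- top and bottom rows are complementary: zigzag case
    have hNB : ∀ j, (T j ↔ ¬ B j) := by
      intro j
      have h := hTBconst j
      tauto
    have hRall : ∀ j, R j := by
      intro j
      obtain ⟨k, rfl⟩ := surj j
      rcases keyT k with ⟨h1,h2,h3⟩|⟨h1,h2,h3⟩|⟨h1,h2,h3⟩
      · exact h1
      · exact h1
      · exfalso
        rcases keyB k with ⟨g1,g2,g3⟩|⟨g1,g2,g3⟩|⟨g1,g2,g3⟩
        · exact h1 g1
        · exact h1 g1
        · exact (hNB k).mp h3 g3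
    have hTalt : ∀ j : Fin n, T (j+1) ↔ ¬ T j := by
      intro j
      rcases keyT j with ⟨h1,h2,h3⟩|⟨h1,h2,h3⟩|⟨h1,h2,h3⟩
      · tauto
      · tauto
      · exact absurd (hRall (j+1)) h1
    have haux : ∀ k : ℕ, (T (k : Fin n) ↔ (Even k ↔ T 0)) := by
      intro k
      induction k with
      | zero => rw [Nat.cast_zero]; have : Even 0 := Even.zero; tauto
      | succ k ih =>
        rw [fin_cast_succ, hTalt, Nat.even_add_one]
        tauto
    have heven : Even n := by
      have h := haux n
      rw [Fin.natCast_self] at h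
      tauto
    refine Or.inr ⟨heven, ?_⟩
    have hTiff : ∀ j : Fin n, T j ↔ (Even j.val ↔ T 0) := by
      intro j
      have h := haux j.val
      rwa [Fin.cast_val_eq_self] at h
    have hzig : ∀ b : Bool, (∀ j : Fin n, T j ↔ (Even j.val ↔ b = true)) → H = zigC n b := by
      intro b hb
      have hBiff : ∀ j, B j ↔ ¬ (Even j.val ↔ b = true) := by
        intro j
        have h1 := hNB j
        have h2 := hb j
        tauto
      ext ⟨x1, x2⟩ ⟨y1, y2⟩
      rw [zigC_adj hn]
      simp only
      constructor
      · intro hadj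
        have hc := hle hadj
        rw [cyl_adj hn] at hc
        simp only at hc
        rcases hc with ⟨h1, h2⟩ | ⟨h1, h2⟩
        · exact Or.inr ⟨h1, h2⟩
        · subst h1
          refine Or.inl ⟨rfl, ?_⟩
          rcases h2 with h | h
          · subst h
            refine Or.inl ⟨rfl, ?_⟩
            rcases fin2_cases x1 with hx | hx <;> subst hx
            · exact ⟨fun _ => (hb x2).mp hadj, fun _ => rfl⟩
            · refine ⟨fun h0 => absurd h0 (by decide), fun hc2 => absurd hc2 ((hBiff x2).mp hadj)⟩
          · subst h
            refine Or.inr ⟨rfl, ?_⟩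
            rcases fin2_cases x1 with hx | hx <;> subst hx
            · exact ⟨fun _ => (hb y2).mp hadj.symm, fun _ => rfl⟩
            · exact ⟨fun h0 => absurd h0 (by decide),
                fun hc2 => absurd hc2 ((hBiff y2).mp hadj.symm)⟩
      · rintro (⟨h1, (⟨h2, h3⟩ | ⟨h2, h3⟩)⟩ | ⟨h1, h2⟩)
        · subst h1; subst h2
          rcases fin2_cases x1 with hx | hx <;> subst hx
          · exact (hb x2).mpr (h3.mp rfl)
          · refine (hBiff x2).mpr fun hcon => ?_
            exact (by decide : ¬((1:Fin 2) = 0)) (h3.mpr hcon)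
        · subst h1; subst h2
          rcases fin2_cases x1 with hx | hx <;> subst hx
          · exact ((hb y2).mpr (h3.mp rfl)).symm
          · refine ((hBiff y2).mpr fun hcon => ?_).symm
            exact (by decide : ¬((1:Fin 2) = 0)) (h3.mpr hcon)
        · subst h2
          rcases fin2_cases x1 with hx | hx <;> subst hx
          · have hy : y1 = 1 := by omega
            subst hy
            exact hRall x2
          · have hy : y1 = 0 := by omega
            subst hy
            exact (hRall x2).symm
    by_cases hT0 : T 0
    · refine ⟨true, hzig true fun j => ?_⟩
      have h := hTiff j
      simp only [show (true = true) = True by simp, iff_true]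
      tauto
    · refine ⟨false, hzig false fun j => ?_⟩
      have h := hTiff j
      simp only [show (false = true) = False by simp, iff_false]
      tauto
end Main

section Count
variable {n : ℕ} [NeZero n]

lemma hamC_isHam (hn : 3 ≤ n) (a : Fin n) : IsHamCycleSub (cylGraph 2 n) (hamC n a) :=
  ⟨hamC_le hn a, hamC_conn hn a, hamC_deg hn a⟩

lemma zigC_isHam (hn : 3 ≤ n) (hev : Even n) (b : Bool) :
    IsHamCycleSub (cylGraph 2 n) (zigC n b) :=
  ⟨zigC_le hn b, zigC_conn hn b, zigC_deg hn hev b⟩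

lemma hamC_missing (hn : 3 ≤ n) (a : Fin n) :
    ¬ (hamC n a).Adj ((0:Fin 2), a) ((0:Fin 2), a + 1) := by
  rw [hamC_adj hn]
  rintro (⟨-, (⟨-, h⟩ | ⟨h, -⟩)⟩ | ⟨h, -⟩)
  · exact h rfl
  · exact fin_add_two_ne hn a (by
      have : a + 1 + 1 = a + 2 := by ring
      rw [this] at h
      exact h.symm)
  · exact h rfl

lemma hamC_edge (hn : 3 ≤ n) {a a' : Fin n} (h : a' ≠ a) :
    (hamC n a).Adj ((0:Fin 2), a') ((0:Fin 2), a' + 1) := by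
  rw [hamC_adj hn]
  exact Or.inl ⟨rfl, Or.inl ⟨rfl, h⟩⟩

lemma hamC_inj (hn : 3 ≤ n) : Function.Injective (hamC n) := by
  intro a a' h
  by_contra hne
  have h1 := hamC_edge hn (fun hh : a' = a => hne hh.symm)
  rw [h] at h1
  exact hamC_missing hn a' h1

lemma zigC_rung (hn : 3 ≤ n) (b : Bool) (j : Fin n) :
    (zigC n b).Adj ((0:Fin 2), j) ((1:Fin 2), j) := by
  rw [zigC_adj hn]
  exact Or.inr ⟨(by decide : (0:Fin 2) ≠ 1), rfl⟩

lemma hamC_no_rung (hn : 3 ≤ n) (a : Fin n) :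
    ¬ (hamC n a).Adj ((0:Fin 2), a + 2) ((1:Fin 2), a + 2) := by
  rw [hamC_adj hn]
  rintro (⟨h, -⟩ | ⟨-, -, (h | h)⟩)
  · exact (by decide : ¬((0:Fin 2) = 1)) h
  · exact fin_add_two_ne hn a h
  · exact fin_one_ne_zero hn (by
      have := congrArg (· - (a + 1)) h
      simpa [show a + 2 - (a+1) = (1:Fin n) by ring] using this)

lemma zigC_ne_hamC (hn : 3 ≤ n) (b : Bool) (a : Fin n) : zigC n b ≠ hamC n a := by
  intro h
  have h1 := zigC_rung hn b (a + 2)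
  rw [h] at h1
  exact hamC_no_rung hn a h1

lemma zigC_true_ne_false (hn : 3 ≤ n) : zigC n true ≠ zigC n false := by
  intro h
  have h1 : (zigC n true).Adj ((0:Fin 2), 0) ((0:Fin 2), 1) := by
    rw [zigC_adj hn]
    refine Or.inl ⟨rfl, Or.inl ⟨(zero_add (1:Fin n)).symm, ?_⟩⟩
    simp
  rw [h] at h1
  rw [zigC_adj hn] at h1
  rcases h1 with ⟨-, (⟨-, h2⟩ | ⟨h2, -⟩)⟩ | ⟨h2, -⟩
  · simpa using h2.mp rfl
  · exact fin_two_ne_zero hn (by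
      have : (1:Fin n) + 1 = 2 := by ring
      rw [this] at h2
      exact h2.symm)
  · exact h2 rfl

lemma count_ham (hn : 3 ≤ n) :
    Nat.card {H : SimpleGraph (Fin 2 × Fin n) // IsHamCycleSub (cylGraph 2 n) H}
      = n + (if Even n then 2 else 0) := by
  have hcard : Nat.card {H : SimpleGraph (Fin 2 × Fin n) // IsHamCycleSub (cylGraph 2 n) H}
      = Set.ncard {H : SimpleGraph (Fin 2 × Fin n) | IsHamCycleSub (cylGraph 2 n) H} :=
    Nat.card_coe_set_eq _
  rw [hcard]
  have hrange : (Set.range (hamC n)).ncard = n := by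
    rw [← Nat.card_coe_set_eq, Nat.card_range_of_injective (hamC_inj hn),
      Nat.card_eq_fintype_card, Fintype.card_fin]
  by_cases hev : Even n
  · have hset : {H : SimpleGraph (Fin 2 × Fin n) | IsHamCycleSub (cylGraph 2 n) H}
        = Set.range (hamC n) ∪ {zigC n true, zigC n false} := by
      ext K
      simp only [Set.mem_setOf_eq, Set.mem_union, Set.mem_range, Set.mem_insert_iff,
        Set.mem_singleton_iff]
      constructor
      · intro hK
        rcases classify hn hK with ⟨a, rfl⟩ | ⟨-, b, rfl⟩
        · exact Or.inl ⟨a, rfl⟩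
        · rcases b with _ | _
          · exact Or.inr (Or.inr rfl)
          · exact Or.inr (Or.inl rfl)
      · rintro (⟨a, rfl⟩ | rfl | rfl)
        · exact hamC_isHam hn a
        · exact zigC_isHam hn hev true
        · exact zigC_isHam hn hev false
    rw [hset, Set.ncard_union_eq ?disj (Set.toFinite _) (Set.toFinite _), hrange,
      Set.ncard_pair (zigC_true_ne_false hn), if_pos hev]
    case disj =>
      rw [Set.disjoint_right]
      rintro K (rfl | rfl) ⟨a, hKa⟩ <;> exact zigC_ne_hamC hn _ a hKa.symm
  · have hset : {H : SimpleGraph (Fin 2 × Fin n) | IsHamCycleSub (cylGraph 2 n) H}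
        = Set.range (hamC n) := by
      ext K
      simp only [Set.mem_setOf_eq, Set.mem_range]
      constructor
      · intro hK
        rcases classify hn hK with ⟨a, rfl⟩ | ⟨hev2, -⟩
        · exact ⟨a, rfl⟩
        · exact absurd hev2 hev
      · rintro ⟨a, rfl⟩
        exact hamC_isHam hn a
    rw [hset, hrange, if_neg hev, Nat.add_zero]
end Count

theorem ham_cycles_prism (n : ℕ) [NeZero n] (hn : 3 ≤ n) :
    (Nat.card {H : SimpleGraph (Fin 2 × Fin n) // IsHamCycleSub (cylGraph 2 n) H} : ℤ)
      = (n : ℤ) + 1 + (-1) ^ n := by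
  rw [count_ham hn]
  by_cases hev : Even n
  · rw [if_pos hev, hev.neg_one_pow]
    push_cast
    ring
  · rw [if_neg hev, (Nat.not_even_iff_odd.mp hev).neg_one_pow]
    push_cast
    ring
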